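/- Let k be a field of characteristic p > 2 and let R = k[x^4, x^2 y, x y^2, y^4] ⊆ k[x,y]. Then x^2 lies in the integral closure of R in its fraction field but no power of the Frobenius of x^2 lies in R, i.e., (x^2)^{p^k} ∉ R for all k ≥ 0; in particular the normalization of R is not purely inseparable over R. -/

import Mathlib

open MvPolynomial

set_option synthInstance.maxHeartbeats 1000000
set_option maxHeartbeats 2000000

/-- The subalgebra of polynomials all of whose monomials with zero `y`-degree have
`x`-degree divisible by 4. -/
def T4 (k : Type*) [Field k] : Subalgebra k (MvPolynomial (Fin 2) k) where
  carrier := {f | ∀ a : Fin 2 →₀ ℕ, coeff a f ≠ 0 → a 1 = 0 → 4 ∣ a 0}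
  add_mem' := by
    intro f g hf hg a ha h1
    rw [Set.mem_setOf_eq] at hf hg
    rw [coeff_add] at ha
    rcases ne_or_eq (coeff a f) 0 with h | h
    · exact hf a h h1
    · exact hg a (by simpa [h] using ha) h1
  mul_mem' := by
    intro f g hf hg a ha h1
    rw [Set.mem_setOf_eq] at hf hg
    rw [coeff_mul] at ha
    obtain ⟨x, hx, hne⟩ := Finset.exists_ne_zero_of_sum_ne_zero ha
    rw [Finset.HasAntidiagonal.mem_antidiagonal] at hx
    have hx1 : x.1 1 = 0 ∧ x.2 1 = 0 := by
      have := congrArg (fun b => b 1) hx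
      simp only [Finsupp.add_apply] at this
      omega
    have h1 := hf x.1 (left_ne_zero_of_mul hne) hx1.1
    have h2 := hg x.2 (right_ne_zero_of_mul hne) hx1.2
    have := congrArg (fun b => b 0) hx
    simp only [Finsupp.add_apply] at this
    omega
  algebraMap_mem' := by
    intro r a ha h1
    by_contra h
    have : a ≠ 0 := by
      intro h0; subst h0; simp at h
    simp [MvPolynomial.coeff_C, Ne.symm this] at ha

/-- Let `k` be a field of characteristic `p > 2` and let
`R = k[x⁴, x²y, xy², y⁴] ⊆ k[x,y]`.  Then `x²` is integral over `R` (it lies in the integral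
closure of `R` in its fraction field), but `(x²)^(p^k) ∉ R` for all `k ≥ 0`; in particular the
normalization of `R` is not purely inseparable over `R`. -/
theorem not_purelyInseparable_normalization_char_odd
    (k : Type*) [Field k] (p : ℕ) [Fact p.Prime] [CharP k p] (hp : 2 < p) :
    let x : MvPolynomial (Fin 2) k := X 0
    let y : MvPolynomial (Fin 2) k := X 1
    let R : Subalgebra k (MvPolynomial (Fin 2) k) :=
      Algebra.adjoin k {x ^ 4, x ^ 2 * y, x * y ^ 2, y ^ 4}
    IsIntegral (↥R) (x ^ 2) ∧ ∀ n : ℕ, (x ^ 2) ^ p ^ n ∉ R := by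
  intro x y R
  have hx4 : x ^ 4 ∈ R := Algebra.subset_adjoin (by simp)
  constructor
  · refine ⟨Polynomial.X ^ 2 - Polynomial.C ⟨x ^ 4, hx4⟩,
      Polynomial.monic_X_pow_sub_C _ two_ne_zero, ?_⟩
    rw [Polynomial.eval₂_sub, Polynomial.eval₂_X_pow, Polynomial.eval₂_C]
    show (x ^ 2) ^ 2 - (⟨x ^ 4, hx4⟩ : R).val = 0
    rw [← pow_mul]
    norm_num
  · intro n hmem
    have hRT : R ≤ T4 k := by
      apply Algebra.adjoin_le
      intro f hf
      simp only [Set.mem_insert_iff, Set.mem_singleton_iff] at hf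
      rcases hf with rfl | rfl | rfl | rfl
      · intro a ha _
        rw [coeff_X_pow] at ha
        have : Finsupp.single (0 : Fin 2) 4 = a := by
          by_contra h; simp [h] at ha
        subst this
        simp
      · intro a ha h1
        have he : x ^ 2 * y = monomial (Finsupp.single 0 2 + Finsupp.single 1 1) (1 : k) := by
          show (X 0 : MvPolynomial (Fin 2) k) ^ 2 * X 1 = _
          rw [monomial_add_single, X_pow_eq_monomial, pow_one]
        rw [he, coeff_monomial] at ha
        have : Finsupp.single (0 : Fin 2) 2 + Finsupp.single 1 1 = a := by
          by_contra h; simp [h] at ha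
        subst this
        simp at h1
      · intro a ha h1
        have he : x * y ^ 2 = monomial (Finsupp.single 0 1 + Finsupp.single 1 2) (1 : k) := by
          show (X 0 : MvPolynomial (Fin 2) k) * X 1 ^ 2 = _
          rw [monomial_single_add, X_pow_eq_monomial, pow_one]
        rw [he, coeff_monomial] at ha
        have : Finsupp.single (0 : Fin 2) 1 + Finsupp.single 1 2 = a := by
          by_contra h; simp [h] at ha
        subst this
        simp at h1
      · intro a ha _
        rw [coeff_X_pow] at ha
        have : Finsupp.single (1 : Fin 2) 4 = a := by
          by_contra h; simp [h] at ha
        subst this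
        simp
    have hT := hRT hmem
    have hcoeff : coeff (Finsupp.single (0 : Fin 2) (2 * p ^ n)) ((x ^ 2) ^ p ^ n) = 1 := by
      rw [← pow_mul, coeff_X_pow]
      simp
    have hdiv : 4 ∣ (Finsupp.single (0 : Fin 2) (2 * p ^ n)) 0 :=
      hT _ (by rw [hcoeff]; exact one_ne_zero) (by simp)
    simp only [Finsupp.single_eq_same] at hdiv
    have hodd : Odd (p ^ n) := (Nat.Prime.odd_of_ne_two (Fact.out) (by omega)).pow
    obtain ⟨m, hm⟩ := hodd
    omega
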